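/- Let L be a set of distinct lines in F_q^n such that at most 2q lines of L lie in any common 2-plane and |L| ≤ 3q². Let X ⊆ F_q^n satisfy |l ∩ X| ≥ q/200 for every l ∈ L. Then |X| ≥ c·|L|·q^{1/2} for an absolute constant c > 0. -/
import Mathlib

open Finset
open scoped Classical

def IsLine (F : Type*) [Field F] {n : ℕ} (l : Set (Fin n → F)) : Prop :=
  ∃ a v : Fin n → F, v ≠ 0 ∧ l = {x | ∃ t : F, x = a + t • v}

def IsFlat (F : Type*) [Field F] {n : ℕ} (d : ℕ) (S : Set (Fin n → F)) : Prop :=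
  ∃ (a : Fin n → F) (W : Submodule F (Fin n → F)),
    Module.finrank F W = d ∧ S = {x | x - a ∈ W}

section Geometry
variable {F : Type*} [Field F] {n : ℕ}

lemma line_through {l : Set (Fin n → F)} (hl : IsLine F l) {x : Fin n → F} (hx : x ∈ l) :
    ∃ v : Fin n → F, v ≠ 0 ∧ l = {y | ∃ t : F, y = x + t • v} := by
  obtain ⟨a, v, hv, rfl⟩ := hl
  obtain ⟨t₀, rfl⟩ := hx
  refine ⟨v, hv, ?_⟩
  ext y
  constructor
  · rintro ⟨t, rfl⟩; exact ⟨t - t₀, by module⟩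
  · rintro ⟨t, rfl⟩; exact ⟨t₀ + t, by module⟩

lemma line_eq_line (x v : Fin n → F) (c : F) (hc : c ≠ 0) :
    {y | ∃ t : F, y = x + t • v} = {y | ∃ t : F, y = x + t • (c • v)} := by
  ext y
  constructor
  · rintro ⟨t, rfl⟩
    exact ⟨c⁻¹ * t, by rw [smul_smul, mul_comm c⁻¹ t, mul_assoc, inv_mul_cancel₀ hc, mul_one]⟩
  · rintro ⟨t, rfl⟩; exact ⟨t * c, by rw [smul_smul]⟩

lemma line_ncard [Fintype F] {l : Set (Fin n → F)} (hl : IsLine F l) :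
    l.ncard = Fintype.card F := by
  obtain ⟨a, v, hv, rfl⟩ := hl
  have h1 : {x | ∃ t : F, x = a + t • v} = Set.range (fun t : F => a + t • v) := by
    ext y; simp [eq_comm, Set.mem_setOf_eq]
  have hinj : Function.Injective (fun t : F => a + t • v) := by
    intro s t h
    simp only [add_right_inj] at h
    exact smul_left_injective F hv h
  rw [h1, ← Nat.card_coe_set_eq, Nat.card_range_of_injective hinj, Nat.card_eq_fintype_card]

lemma lines_inter [Fintype F] {l₁ l₂ : Set (Fin n → F)} (h1 : IsLine F l₁) (h2 : IsLine F l₂)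
    (hne : l₁ ≠ l₂) : (l₁ ∩ l₂).ncard ≤ 1 := by
  rw [Set.ncard_le_one (Set.toFinite _)]
  rintro x ⟨hx1, hx2⟩ y ⟨hy1, hy2⟩
  by_contra hxy
  apply hne
  obtain ⟨v₁, hv₁, rfl⟩ := line_through h1 hx1
  obtain ⟨v₂, hv₂, rfl⟩ := line_through h2 hx2
  obtain ⟨t₁, ht₁⟩ := hy1
  obtain ⟨t₂, ht₂⟩ := hy2
  have ht₁0 : t₁ ≠ 0 := by rintro rfl; simp only [zero_smul, add_zero] at ht₁; exact hxy ht₁.symm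
  have ht₂0 : t₂ ≠ 0 := by rintro rfl; simp only [zero_smul, add_zero] at ht₂; exact hxy ht₂.symm
  have hvv : t₁ • v₁ = t₂ • v₂ := by
    have := ht₁.symm.trans ht₂
    exact add_left_cancel this
  have hv2 : v₂ = (t₂⁻¹ * t₁) • v₁ := by
    rw [mul_smul, hvv, inv_smul_smul₀ ht₂0]
  rw [hv2, ← line_eq_line x v₁ _ (mul_ne_zero (inv_ne_zero ht₂0) ht₁0)]

lemma span_pair_rank {v₀ u : Fin n → F} (hind : LinearIndependent F ![v₀, u]) :
    Module.finrank F (Submodule.span F ({v₀, u} : Set (Fin n → F))) = 2 := by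
  have h1 : ({v₀, u} : Set (Fin n → F)) = Set.range ![v₀, u] := by
    ext y
    simp [Matrix.range_cons, Matrix.range_empty, or_comm]
  rw [h1, finrank_span_eq_card hind]
  simp

lemma pair_indep {v₀ u : Fin n → F} (hv₀ : v₀ ≠ 0)
    (h : ∀ c : F, c ≠ 0 → u ≠ c • v₀) (hu : u ≠ 0) : LinearIndependent F ![v₀, u] := by
  rw [LinearIndependent.pair_iff]
  intro s t hst
  by_cases ht : t = 0
  · subst ht
    simp only [zero_smul, add_zero, smul_eq_zero] at hst
    exact ⟨hst.resolve_right hv₀, rfl⟩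
  · exfalso
    have hs : s ≠ 0 := by
      rintro rfl
      simp only [zero_smul, zero_add, smul_eq_zero] at hst
      exact hu (hst.resolve_left ht)
    have h2 : t • u = (-s) • v₀ := by
      rw [neg_smul, eq_neg_iff_add_eq_zero, add_comm]; exact hst
    have h3 : u = (t⁻¹ * -s) • v₀ := by
      rw [mul_smul, ← h2, ← mul_smul, inv_mul_cancel₀ ht, one_smul]
    exact h _ (by simp [ht, hs]) h3

lemma exists_plane {l₀ l : Set (Fin n → F)} (h0 : IsLine F l₀) (h1 : IsLine F l)
    (hne : l₀ ≠ l) {x : Fin n → F} (hx0 : x ∈ l₀) (hx1 : x ∈ l) :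
    ∃ π : Set (Fin n → F), IsFlat F 2 π ∧ l₀ ⊆ π ∧ l ⊆ π := by
  obtain ⟨v₀, hv₀, hl₀⟩ := line_through h0 hx0
  obtain ⟨v, hv, hl⟩ := line_through h1 hx1
  have hind : LinearIndependent F ![v₀, v] := by
    refine pair_indep hv₀ (fun c hc hcv => hne ?_) hv
    rw [hl₀, hl, hcv, ← line_eq_line x v₀ c hc]
  refine ⟨{y | y - x ∈ Submodule.span F ({v₀, v} : Set (Fin n → F))},
    ⟨x, _, span_pair_rank hind, rfl⟩, ?_, ?_⟩
  · rw [hl₀]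
    rintro y ⟨t, rfl⟩
    simp only [Set.mem_setOf_eq, add_sub_cancel_left]
    exact Submodule.smul_mem _ _ (Submodule.subset_span (Set.mem_insert _ _))
  · rw [hl]
    rintro y ⟨t, rfl⟩
    simp only [Set.mem_setOf_eq, add_sub_cancel_left]
    exact Submodule.smul_mem _ _ (Submodule.subset_span (Set.mem_insert_of_mem _ rfl))

lemma plane_unique {l₀ π₁ π₂ : Set (Fin n → F)} (h0 : IsLine F l₀)
    (hπ₁ : IsFlat F 2 π₁) (hπ₂ : IsFlat F 2 π₂) (hs1 : l₀ ⊆ π₁) (hs2 : l₀ ⊆ π₂)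
    {z : Fin n → F} (hz1 : z ∈ π₁) (hz2 : z ∈ π₂) (hzl : z ∉ l₀) : π₁ = π₂ := by
  obtain ⟨a₀, v₀, hv₀, hl₀⟩ := h0
  have hp : a₀ ∈ l₀ := by rw [hl₀]; exact ⟨0, by simp⟩
  have hpv : a₀ + v₀ ∈ l₀ := by rw [hl₀]; exact ⟨1, by simp⟩
  obtain ⟨a₁, W₁, hr₁, rfl⟩ := hπ₁
  obtain ⟨a₂, W₂, hr₂, rfl⟩ := hπ₂
  have key : ∀ (a : Fin n → F) (W : Submodule F (Fin n → F)),
      a₀ - a ∈ W → ∀ y : Fin n → F, (y - a ∈ W ↔ y - a₀ ∈ W) := by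
    intro a W ha y
    constructor
    · intro h; have := W.sub_mem h ha; rwa [sub_sub_sub_cancel_right] at this
    · intro h; have := W.add_mem h ha; rwa [sub_add_sub_cancel] at this
  have ha₁ : a₀ - a₁ ∈ W₁ := hs1 hp
  have ha₂ : a₀ - a₂ ∈ W₂ := hs2 hp
  have hv₀1 : v₀ ∈ W₁ := by
    have := (key a₁ W₁ ha₁ (a₀ + v₀)).mp (hs1 hpv)
    rwa [add_sub_cancel_left] at this
  have hv₀2 : v₀ ∈ W₂ := by
    have := (key a₂ W₂ ha₂ (a₀ + v₀)).mp (hs2 hpv)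
    rwa [add_sub_cancel_left] at this
  set u := z - a₀ with hu_def
  have hu1 : u ∈ W₁ := (key a₁ W₁ ha₁ z).mp hz1
  have hu2 : u ∈ W₂ := (key a₂ W₂ ha₂ z).mp hz2
  have hu0 : u ≠ 0 := by
    intro h
    apply hzl
    rw [hl₀]
    exact ⟨0, by rw [zero_smul, add_zero]; exact (sub_eq_zero.mp h)⟩
  have hind : LinearIndependent F ![v₀, u] := by
    refine pair_indep hv₀ (fun c hc hcv => ?_) hu0
    apply hzl
    rw [hl₀]
    exact ⟨c, by rw [← hcv, hu_def]; abel⟩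
  have hspan1 : Submodule.span F ({v₀, u} : Set (Fin n → F)) = W₁ := by
    apply Submodule.eq_of_le_of_finrank_eq
    · rw [Submodule.span_le]; rintro w (rfl | rfl) <;> simp [hv₀1, hu1]
    · rw [span_pair_rank hind, hr₁]
  have hspan2 : Submodule.span F ({v₀, u} : Set (Fin n → F)) = W₂ := by
    apply Submodule.eq_of_le_of_finrank_eq
    · rw [Submodule.span_le]; rintro w (rfl | rfl) <;> simp [hv₀2, hu2]
    · rw [span_pair_rank hind, hr₂]
  have hW : W₁ = W₂ := hspan1.symm.trans hspan2
  ext y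
  constructor
  · intro hy; exact (key a₂ W₂ ha₂ y).mpr (hW ▸ ((key a₁ W₁ ha₁ y).mp hy))
  · intro hy; exact (key a₁ W₁ ha₁ y).mpr (hW.symm ▸ ((key a₂ W₂ ha₂ y).mp hy))

end Geometry
section Counting
variable {F : Type*} [Field F] [Fintype F] {n : ℕ}

lemma ncard_filter_eq (A Y : Set (Fin n → F)) :
    (A ∩ Y).ncard = (Y.toFinset.filter (· ∈ A)).card := by
  rw [Set.ncard_eq_toFinset_card']
  congr 1
  ext y
  simp [Set.mem_toFinset, and_comm]

lemma sum_card_filter_comm (T : Finset (Set (Fin n → F))) (Y : Finset (Fin n → F)) :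
    ∑ l ∈ T, (Y.filter (· ∈ l)).card = ∑ y ∈ Y, (T.filter (y ∈ ·)).card := by
  simp_rw [Finset.card_filter]
  exact Finset.sum_comm

lemma sum_sq_eq (T : Finset (Set (Fin n → F))) (Y : Finset (Fin n → F)) :
    ∑ y ∈ Y, ((T.filter (y ∈ ·)).card) ^ 2
      = ∑ l ∈ T, ∑ l' ∈ T, (Y.filter (fun y => y ∈ l ∧ y ∈ l')).card := by
  have hy : ∀ y, ((T.filter (y ∈ ·)).card) ^ 2
      = ∑ l ∈ T, ∑ l' ∈ T, if y ∈ l ∧ y ∈ l' then 1 else 0 := by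
    intro y
    rw [sq, Finset.card_filter, Finset.sum_mul_sum]
    refine Finset.sum_congr rfl fun l _ => Finset.sum_congr rfl fun l' _ => ?_
    by_cases h1 : y ∈ l <;> by_cases h2 : y ∈ l' <;> simp [h1, h2]
  calc ∑ y ∈ Y, ((T.filter (y ∈ ·)).card) ^ 2
      = ∑ y ∈ Y, ∑ l ∈ T, ∑ l' ∈ T, if y ∈ l ∧ y ∈ l' then 1 else 0 :=
        Finset.sum_congr rfl fun y _ => hy y
    _ = ∑ l ∈ T, ∑ y ∈ Y, ∑ l' ∈ T, if y ∈ l ∧ y ∈ l' then 1 else 0 := Finset.sum_comm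
    _ = ∑ l ∈ T, ∑ l' ∈ T, ∑ y ∈ Y, if y ∈ l ∧ y ∈ l' then 1 else 0 :=
        Finset.sum_congr rfl fun l _ => Finset.sum_comm
    _ = _ := by simp_rw [Finset.card_filter]

lemma plane_count {q : ℕ} (hq : 400 ≤ q) (T : Finset (Set (Fin n → F))) (Y : Set (Fin n → F))
    (hpair : ∀ l ∈ T, ∀ l' ∈ T, l ≠ l' → (l ∩ l').ncard ≤ 1)
    (hK : T.card ≤ 2 * q)
    (hβ : ∀ l ∈ T, (q : ℝ) / 400 ≤ ((l ∩ Y).ncard : ℝ)) :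
    (T.card : ℝ) * q / 640000 ≤ (Y.ncard : ℝ) := by
  classical
  set Y' := Y.toFinset with hY'
  set r : (Fin n → F) → ℕ := fun y => (T.filter (y ∈ ·)).card with hr
  have hI_sum : ∑ l ∈ T, (l ∩ Y).ncard = ∑ y ∈ Y', r y := by
    simp_rw [ncard_filter_eq]
    exact sum_card_filter_comm T Y'
  set I : ℝ := ∑ l ∈ T, ((l ∩ Y).ncard : ℝ) with hI
  have hIlb : (T.card : ℝ) * ((q : ℝ) / 400) ≤ I := by
    rw [hI]
    calc (T.card : ℝ) * ((q : ℝ) / 400) = ∑ _l ∈ T, ((q : ℝ) / 400) := by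
          rw [Finset.sum_const, nsmul_eq_mul]
      _ ≤ ∑ l ∈ T, ((l ∩ Y).ncard : ℝ) := Finset.sum_le_sum hβ
  have hP : (Y.ncard : ℝ) = (Y'.card : ℝ) := by rw [Set.ncard_eq_toFinset_card']
  have hCS : I ^ 2 ≤ (Y.ncard : ℝ) * ∑ y ∈ Y', (r y : ℝ) ^ 2 := by
    have : I = ∑ y ∈ Y', (r y : ℝ) := by rw [hI, ← Nat.cast_sum, hI_sum, Nat.cast_sum]
    rw [this, hP]
    exact sq_sum_le_card_mul_sum_sq
  -- bound on sum of squares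
  have hsqn : ∑ y ∈ Y', r y ^ 2 ≤ (∑ l ∈ T, (l ∩ Y).ncard) + T.card * T.card := by
    rw [hr]
    rw [sum_sq_eq]
    have hbound : ∀ l ∈ T, ∑ l' ∈ T, (Y'.filter (fun y => y ∈ l ∧ y ∈ l')).card
        ≤ (l ∩ Y).ncard + T.card := by
      intro l hl
      rw [← Finset.add_sum_erase _ _ hl]
      have hdiag : (Y'.filter (fun y => y ∈ l ∧ y ∈ l)).card = (l ∩ Y).ncard := by
        rw [ncard_filter_eq]
        congr 1
        ext y
        simp [hY', Set.mem_toFinset]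
      have hoff : ∑ l' ∈ T.erase l, (Y'.filter (fun y => y ∈ l ∧ y ∈ l')).card ≤ T.card := by
        calc ∑ l' ∈ T.erase l, (Y'.filter (fun y => y ∈ l ∧ y ∈ l')).card
            ≤ ∑ _l' ∈ T.erase l, 1 := by
              refine Finset.sum_le_sum fun l' hl' => ?_
              have hcard : (Y'.filter (fun y => y ∈ l ∧ y ∈ l')).card = ((l ∩ l') ∩ Y).ncard := by
                rw [ncard_filter_eq]
                congr 1
                ext y
                simp [hY', Set.mem_toFinset, and_assoc]
              rw [hcard]
              calc ((l ∩ l') ∩ Y).ncard ≤ (l ∩ l').ncard :=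
                    Set.ncard_le_ncard Set.inter_subset_left (Set.toFinite _)
                _ ≤ 1 := hpair l hl l' (Finset.mem_of_mem_erase hl')
                    (Ne.symm (Finset.ne_of_mem_erase hl'))
          _ = (T.erase l).card := by rw [Finset.sum_const, smul_eq_mul, mul_one]
          _ ≤ T.card := Finset.card_le_card (Finset.erase_subset _ _)
      omega
    calc ∑ l ∈ T, ∑ l' ∈ T, (Y'.filter (fun y => y ∈ l ∧ y ∈ l')).card
        ≤ ∑ l ∈ T, ((l ∩ Y).ncard + T.card) := Finset.sum_le_sum hbound
      _ = (∑ l ∈ T, (l ∩ Y).ncard) + T.card * T.card := by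
          rw [Finset.sum_add_distrib, Finset.sum_const, smul_eq_mul]
  have hsq : ∑ y ∈ Y', (r y : ℝ) ^ 2 ≤ I + (T.card : ℝ) * T.card := by
    rw [hI]
    exact_mod_cast hsqn
  -- real arithmetic
  have hq' : (400 : ℝ) ≤ (q : ℝ) := by exact_mod_cast hq
  have hk0 : (0 : ℝ) ≤ (T.card : ℝ) := Nat.cast_nonneg _
  have hP0 : (0 : ℝ) ≤ (Y.ncard : ℝ) := Nat.cast_nonneg _
  have hK' : (T.card : ℝ) ≤ 2 * q := by exact_mod_cast hK
  set k : ℝ := (T.card : ℝ) with hk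
  set P : ℝ := (Y.ncard : ℝ) with hPdef
  have hmain : I ^ 2 ≤ P * (I + k * k) :=
    le_trans hCS (mul_le_mul_of_nonneg_left hsq hP0)
  clear_value I k P
  clear hCS hsq hsqn hI_sum hP hβ hpair hI
  rcases eq_or_lt_of_le hk0 with hke | hke
  · rw [← hke]
    simpa using hP0
  · have hIpos : 0 < I := lt_of_lt_of_le (by positivity) hIlb
    by_cases hcase : k ^ 2 ≤ I
    · have h2 : I ≤ 2 * P := by
        nlinarith [mul_le_mul_of_nonneg_left hcase hP0, hmain, hIpos]
      linarith [hIlb, h2]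
    · push_neg at hcase
      have hI2 : (k * ((q : ℝ) / 400)) ^ 2 ≤ I ^ 2 := by
        have h0 : (0:ℝ) ≤ k * ((q:ℝ)/400) := by positivity
        exact pow_le_pow_left₀ h0 hIlb 2
      have hPk : I ^ 2 ≤ 2 * P * k ^ 2 := by
        have := mul_le_mul_of_nonneg_left (le_of_lt hcase) hP0
        nlinarith [hmain]
      have hq2 : (q : ℝ) ^ 2 ≤ 320000 * P := by
        nlinarith [mul_pos hke hke, hI2, hPk]
      have hkq : k * (q:ℝ) ≤ 2 * ((q:ℝ) * (q:ℝ)) := by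
        have hq0 : (0:ℝ) ≤ (q:ℝ) := by positivity
        calc k * (q:ℝ) ≤ (2 * (q:ℝ)) * (q:ℝ) := mul_le_mul_of_nonneg_right hK' hq0
          _ = 2 * ((q:ℝ) * (q:ℝ)) := by ring
      nlinarith [hq2, hkq]
end Counting

section Hairbrush
variable {F : Type*} [Field F] [Fintype F] {n : ℕ}

lemma hairbrush (hq : 400 ≤ Fintype.card F) (L : Finset (Set (Fin n → F))) (X : Set (Fin n → F))
    (hlines : ∀ l ∈ L, IsLine F l)
    (hplane : ∀ π : Set (Fin n → F), IsFlat F 2 π →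
      ({l | l ∈ L ∧ l ⊆ π}).ncard ≤ 2 * Fintype.card F)
    (hX : ∀ l ∈ L, (Fintype.card F : ℝ) / 200 ≤ ((l ∩ X).ncard : ℝ))
    {l₀ : Set (Fin n → F)} (hl₀ : l₀ ∈ L) :
    ((((L.erase l₀).filter (fun l' => (l₀ ∩ l').Nonempty)).card : ℝ)) * (Fintype.card F) / 640000
      ≤ (X.ncard : ℝ) := by
  classical
  set q := Fintype.card F with hqdef
  set H := (L.erase l₀).filter (fun l' => (l₀ ∩ l').Nonempty) with hH
  have hHmem : ∀ l ∈ H, l ∈ L ∧ l ≠ l₀ ∧ (l₀ ∩ l).Nonempty := by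
    intro l hl
    rw [hH, Finset.mem_filter, Finset.mem_erase] at hl
    exact ⟨hl.1.2, hl.1.1, hl.2⟩
  have hch : ∀ l : Set (Fin n → F), ∃ π : Set (Fin n → F),
      l ∈ H → IsFlat F 2 π ∧ l₀ ⊆ π ∧ l ⊆ π := by
    intro l
    by_cases hl : l ∈ H
    · obtain ⟨hlL, hne, x, hx0, hx1⟩ := hHmem l hl
      obtain ⟨π, hπ⟩ := exists_plane (hlines l₀ hl₀) (hlines l hlL) (Ne.symm hne) hx0 hx1
      exact ⟨π, fun _ => hπ⟩
    · exact ⟨∅, fun h => absurd h hl⟩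
  choose f hf using hch
  set P := H.image f with hPdef
  have hfib : H.card = ∑ p ∈ P, (H.filter (fun l => f l = p)).card :=
    Finset.card_eq_sum_card_fiberwise (fun l hl => Finset.mem_image_of_mem f hl)
  have key : ∀ p ∈ P, ((H.filter (fun l => f l = p)).card : ℝ) * q / 640000
      ≤ (((X ∩ p) \ l₀).ncard : ℝ) := by
    intro p hp
    obtain ⟨l₁, hl₁H, hpl₁⟩ := Finset.mem_image.1 hp
    have hπ₁ := hf l₁ hl₁H
    rw [hpl₁] at hπ₁
    apply plane_count hq
    · intro l hl l' hl' hne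
      exact lines_inter (hlines l (hHmem l (Finset.mem_of_mem_filter _ hl)).1)
        (hlines l' (hHmem l' (Finset.mem_of_mem_filter _ hl')).1) hne
    · have hsub : ↑(H.filter (fun l => f l = p)) ⊆ {l : Set (Fin n → F) | l ∈ L ∧ l ⊆ p} := by
        intro l hl
        rw [Finset.mem_coe, Finset.mem_filter] at hl
        refine ⟨(hHmem l hl.1).1, ?_⟩
        have := (hf l hl.1).2.2
        rwa [hl.2] at this
      calc (H.filter (fun l => f l = p)).card
          = (↑(H.filter (fun l => f l = p)) : Set _).ncard := (Set.ncard_coe_finset _).symm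
        _ ≤ ({l : Set (Fin n → F) | l ∈ L ∧ l ⊆ p}).ncard := Set.ncard_le_ncard hsub
        _ ≤ 2 * q := hplane p hπ₁.1
    · intro l hl
      rw [Finset.mem_filter] at hl
      obtain ⟨hlH, hfl⟩ := hl
      obtain ⟨hlL, hne, -⟩ := hHmem l hlH
      have hsub2 : (l ∩ X) \ l₀ ⊆ l ∩ ((X ∩ p) \ l₀) := by
        rintro y ⟨⟨hyl, hyX⟩, hyl₀⟩
        have hlp : l ⊆ p := by have := (hf l hlH).2.2; rwa [hfl] at this
        exact ⟨hyl, ⟨hyX, hlp hyl⟩, hyl₀⟩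
      have h1 : (l ∩ X).ncard ≤ ((l ∩ X) \ l₀).ncard + ((l ∩ X) ∩ l₀).ncard := by
        calc (l ∩ X).ncard ≤ (((l ∩ X) \ l₀) ∪ ((l ∩ X) ∩ l₀)).ncard :=
            Set.ncard_le_ncard (fun y hy => by
              by_cases h : y ∈ l₀
              · exact Or.inr ⟨hy, h⟩
              · exact Or.inl ⟨hy, h⟩)
          _ ≤ _ := Set.ncard_union_le _ _
      have h2 : ((l ∩ X) ∩ l₀).ncard ≤ 1 := by
        calc ((l ∩ X) ∩ l₀).ncard ≤ (l ∩ l₀).ncard :=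
            Set.ncard_le_ncard (fun y hy => ⟨hy.1.1, hy.2⟩)
          _ ≤ 1 := lines_inter (hlines l hlL) (hlines l₀ hl₀) hne
      have h3 : ((q : ℝ) / 200) - 1 ≤ (((l ∩ X) \ l₀).ncard : ℝ) := by
        have hX' := hX l hlL
        have h1' : ((l ∩ X).ncard : ℝ) ≤ (((l ∩ X) \ l₀).ncard : ℝ)
            + (((l ∩ X) ∩ l₀).ncard : ℝ) := by exact_mod_cast h1
        have h2' : ((((l ∩ X) ∩ l₀).ncard) : ℝ) ≤ 1 := by exact_mod_cast h2
        linarith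
      have h4 : (((l ∩ X) \ l₀).ncard : ℝ) ≤ ((l ∩ ((X ∩ p) \ l₀)).ncard : ℝ) := by
        exact_mod_cast Set.ncard_le_ncard hsub2
      have hq' : (400 : ℝ) ≤ (q : ℝ) := by exact_mod_cast hq
      linarith
  have hdisj : ∀ p ∈ P, ∀ p' ∈ P, p ≠ p' →
      Disjoint ((X ∩ p) \ l₀).toFinset ((X ∩ p') \ l₀).toFinset := by
    intro p hp p' hp' hne
    rw [Finset.disjoint_left]
    intro z hz hz'
    rw [Set.mem_toFinset] at hz hz'
    obtain ⟨l₁, hl₁, rfl⟩ := Finset.mem_image.1 hp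
    obtain ⟨l₂, hl₂, rfl⟩ := Finset.mem_image.1 hp'
    exact hne (plane_unique (hlines l₀ hl₀) (hf l₁ hl₁).1 (hf l₂ hl₂).1
      (hf l₁ hl₁).2.1 (hf l₂ hl₂).2.1 hz.1.2 hz'.1.2 hz.2)
  have hsum : ∑ p ∈ P, ((X ∩ p) \ l₀).ncard ≤ X.ncard := by
    calc ∑ p ∈ P, ((X ∩ p) \ l₀).ncard
        = ∑ p ∈ P, ((X ∩ p) \ l₀).toFinset.card := by
          simp_rw [Set.ncard_eq_toFinset_card']
      _ = (P.biUnion (fun p => ((X ∩ p) \ l₀).toFinset)).card :=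
          (Finset.card_biUnion hdisj).symm
      _ ≤ X.toFinset.card := Finset.card_le_card (by
          intro y hy
          rw [Finset.mem_biUnion] at hy
          obtain ⟨p, hp, hyp⟩ := hy
          rw [Set.mem_toFinset] at hyp ⊢
          exact hyp.1.1)
      _ = X.ncard := (Set.ncard_eq_toFinset_card' X).symm
  calc (H.card : ℝ) * q / 640000
      = ∑ p ∈ P, ((H.filter (fun l => f l = p)).card : ℝ) * q / 640000 := by
        rw [hfib, Nat.cast_sum, Finset.sum_mul, Finset.sum_div]
    _ ≤ ∑ p ∈ P, (((X ∩ p) \ l₀).ncard : ℝ) := Finset.sum_le_sum key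
    _ ≤ (X.ncard : ℝ) := by exact_mod_cast hsum

end Hairbrush

set_option maxHeartbeats 2000000 in
theorem stmt_12 :
    ∃ c : ℝ, 0 < c ∧
      ∀ (F : Type) [Field F] [Fintype F] (n : ℕ) (L : Finset (Set (Fin n → F)))
        (X : Set (Fin n → F)),
        (∀ l ∈ L, IsLine F l) →
        (∀ π : Set (Fin n → F), IsFlat F 2 π →
          ({l | l ∈ L ∧ l ⊆ π}).ncard ≤ 2 * Fintype.card F) →
        L.card ≤ 3 * (Fintype.card F) ^ 2 →
        (∀ l ∈ L, (Fintype.card F : ℝ) / 200 ≤ ((l ∩ X).ncard : ℝ)) →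
        c * L.card * Real.sqrt (Fintype.card F) ≤ (X.ncard : ℝ) := by
  refine ⟨1 / 10000000, by norm_num, ?_⟩
  intro F _ _ n L X hlines hplane hL hX
  classical
  set q := Fintype.card F with hqdef
  have hq0 : (0 : ℝ) ≤ (q : ℝ) := Nat.cast_nonneg _
  have hs0 : 0 ≤ Real.sqrt q := Real.sqrt_nonneg _
  rcases L.eq_empty_or_nonempty with rfl | ⟨l₁, hl₁⟩
  · simp only [Finset.card_empty, Nat.cast_zero, mul_zero, zero_mul]
    positivity
  have hXlb : (q : ℝ) / 200 ≤ (X.ncard : ℝ) := by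
    refine le_trans (hX l₁ hl₁) ?_
    exact_mod_cast Set.ncard_le_ncard Set.inter_subset_right
  have hLq : (L.card : ℝ) ≤ 3 * (q : ℝ) ^ 2 := by exact_mod_cast hL
  by_cases hq400 : q < 400
  · -- small q : trivial bound
    have hsqle : Real.sqrt q ≤ 20 := by
      have h400 : (q : ℝ) ≤ 400 := by exact_mod_cast hq400.le
      have : Real.sqrt q ≤ Real.sqrt 400 := Real.sqrt_le_sqrt h400
      rwa [show (400 : ℝ) = 20 ^ 2 by norm_num, Real.sqrt_sq (by norm_num)] at this
    have hqle : (q : ℝ) ≤ 400 := by exact_mod_cast hq400.le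
    have hL0 : (0 : ℝ) ≤ (L.card : ℝ) := Nat.cast_nonneg _
    calc (1 / 10000000 : ℝ) * L.card * Real.sqrt q
        ≤ (1 / 10000000 : ℝ) * (3 * (q : ℝ) ^ 2) * 20 := by
          apply mul_le_mul _ hsqle hs0 (by positivity)
          apply mul_le_mul_of_nonneg_left hLq (by norm_num)
      _ ≤ (q : ℝ) / 200 := by nlinarith
      _ ≤ (X.ncard : ℝ) := hXlb
  · push_neg at hq400
    by_contra hcon
    push_neg at hcon
    have hq' : (400 : ℝ) ≤ (q : ℝ) := by exact_mod_cast hq400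
    -- setup
    set X' := X.toFinset with hX'
    set r : (Fin n → F) → ℕ := fun y => (L.filter (y ∈ ·)).card with hr
    have hI_sum : ∑ l ∈ L, (l ∩ X).ncard = ∑ y ∈ X', r y := by
      simp_rw [ncard_filter_eq]
      exact sum_card_filter_comm L X'
    set I : ℝ := ∑ l ∈ L, ((l ∩ X).ncard : ℝ) with hI
    have hIlb : (L.card : ℝ) * ((q : ℝ) / 200) ≤ I := by
      rw [hI]
      calc (L.card : ℝ) * ((q : ℝ) / 200) = ∑ _l ∈ L, ((q : ℝ) / 200) := by
            rw [Finset.sum_const, nsmul_eq_mul]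
        _ ≤ ∑ l ∈ L, ((l ∩ X).ncard : ℝ) := Finset.sum_le_sum hX
    have hPe : (X.ncard : ℝ) = (X'.card : ℝ) := by rw [Set.ncard_eq_toFinset_card']
    have hCS : I ^ 2 ≤ (X.ncard : ℝ) * ∑ y ∈ X', (r y : ℝ) ^ 2 := by
      have : I = ∑ y ∈ X', (r y : ℝ) := by rw [hI, ← Nat.cast_sum, hI_sum, Nat.cast_sum]
      rw [this, hPe]
      exact sq_sum_le_card_mul_sum_sq
    -- multiplicity function
    set m : Set (Fin n → F) → ℕ :=
      fun l => ((L.erase l).filter (fun l' => (l ∩ l').Nonempty)).card with hm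
    have hsqn : ∑ y ∈ X', r y ^ 2 ≤ (∑ l ∈ L, (l ∩ X).ncard) + ∑ l ∈ L, m l := by
      rw [hr, sum_sq_eq]
      have hbound : ∀ l ∈ L, ∑ l' ∈ L, (X'.filter (fun y => y ∈ l ∧ y ∈ l')).card
          ≤ (l ∩ X).ncard + m l := by
        intro l hl
        rw [← Finset.add_sum_erase _ _ hl]
        have hdiag : (X'.filter (fun y => y ∈ l ∧ y ∈ l)).card = (l ∩ X).ncard := by
          rw [ncard_filter_eq]
          congr 1
          ext y
          simp [hX', Set.mem_toFinset]
        have hoff : ∑ l' ∈ L.erase l, (X'.filter (fun y => y ∈ l ∧ y ∈ l')).card ≤ m l := by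
          simp only [hm]
          rw [Finset.card_filter]
          refine Finset.sum_le_sum fun l' hl' => ?_
          have hcard : (X'.filter (fun y => y ∈ l ∧ y ∈ l')).card = ((l ∩ l') ∩ X).ncard := by
            rw [ncard_filter_eq]
            congr 1
            ext y
            simp [hX', Set.mem_toFinset, and_assoc]
          rw [hcard]
          by_cases hne : (l ∩ l').Nonempty
          · rw [if_pos hne]
            calc ((l ∩ l') ∩ X).ncard ≤ (l ∩ l').ncard :=
                Set.ncard_le_ncard Set.inter_subset_left
              _ ≤ 1 := lines_inter (hlines l hl)
                  (hlines l' (Finset.mem_of_mem_erase hl'))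
                  (Ne.symm (Finset.ne_of_mem_erase hl'))
          · rw [if_neg hne]
            rw [Set.not_nonempty_iff_eq_empty] at hne
            simp [hne]
        omega
      calc ∑ l ∈ L, ∑ l' ∈ L, (X'.filter (fun y => y ∈ l ∧ y ∈ l')).card
          ≤ ∑ l ∈ L, ((l ∩ X).ncard + m l) := Finset.sum_le_sum hbound
        _ = (∑ l ∈ L, (l ∩ X).ncard) + ∑ l ∈ L, m l := Finset.sum_add_distrib
    -- maximal line
    obtain ⟨l₀, hl₀, hmax⟩ := Finset.exists_max_image L m ⟨l₁, hl₁⟩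
    have hsum_m : ∑ l ∈ L, m l ≤ L.card * m l₀ := by
      calc ∑ l ∈ L, m l ≤ ∑ _l ∈ L, m l₀ := Finset.sum_le_sum fun l hl => hmax l hl
        _ = L.card * m l₀ := by rw [Finset.sum_const, smul_eq_mul]
    -- hairbrush bound
    have hhb : ((m l₀ : ℝ)) * (q : ℝ) / 640000 ≤ (X.ncard : ℝ) :=
      hairbrush hq400 L X hlines hplane hX hl₀
    -- assemble the real inequalities
    set kL : ℝ := (L.card : ℝ) with hkL
    set Pc : ℝ := (X.ncard : ℝ) with hPc0def
    set m₀ : ℝ := (m l₀ : ℝ) with hm₀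
    set s : ℝ := Real.sqrt q with hs
    have hB : I ^ 2 ≤ Pc * (I + kL * m₀) := by
      refine le_trans hCS (mul_le_mul_of_nonneg_left ?_ (Nat.cast_nonneg _))
      have h1 : (∑ y ∈ X', (r y : ℝ) ^ 2) ≤ ((∑ l ∈ L, (l ∩ X).ncard : ℕ) : ℝ)
          + ((∑ l ∈ L, m l : ℕ) : ℝ) := by exact_mod_cast hsqn
      have h2 : ((∑ l ∈ L, m l : ℕ) : ℝ) ≤ kL * m₀ := by
        rw [hkL, hm₀]
        exact_mod_cast hsum_m
      have h3 : ((∑ l ∈ L, (l ∩ X).ncard : ℕ) : ℝ) = I := by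
        rw [hI, Nat.cast_sum]
      linarith
    have hs2 : s ^ 2 = (q : ℝ) := Real.sq_sqrt hq0
    have hs20 : 20 ≤ s := by
      rw [hs]
      have : Real.sqrt 400 ≤ Real.sqrt q := Real.sqrt_le_sqrt hq'
      rwa [show (400 : ℝ) = 20 ^ 2 by norm_num, Real.sqrt_sq (by norm_num)] at this
    have hkL1 : 1 ≤ kL := by
      rw [hkL]
      exact_mod_cast Finset.card_pos.mpr ⟨l₁, hl₁⟩
    have hkL0 : (0 : ℝ) ≤ kL := by linarith
    have hPcs : Pc < 1 / 10000000 * kL * s := hcon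
    have hPc0 : (0 : ℝ) ≤ Pc := Nat.cast_nonneg _
    have hqpos : (0 : ℝ) < (q : ℝ) := by linarith
    have hC' : m₀ * (q : ℝ) ≤ 640000 * Pc := by
      rw [hm₀]
      linarith [hhb]
    have hm₀0 : (0 : ℝ) ≤ m₀ := Nat.cast_nonneg _
    clear hCS hsqn hI_sum hsum_m hmax hhb hcon hX hXlb hPe hplane hlines hL hI hm₀ hkL hPc0def hs
    clear_value I kL Pc m₀ s
    have hI0 : 0 < I := by nlinarith
    have hIs : kL * s / 10 ≤ I := by nlinarith [mul_nonneg hkL0 hs0]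
    have hPI : Pc ≤ I / 2 := by nlinarith [mul_nonneg hkL0 hs0]
    have hB'' : (q : ℝ) * I ^ 2 ≤ (q : ℝ) * (Pc * I) + 640000 * kL * Pc ^ 2 := by
      have t1 : (q : ℝ) * I ^ 2 ≤ (q : ℝ) * (Pc * (I + kL * m₀)) :=
        mul_le_mul_of_nonneg_left hB hq0
      have t2 : kL * (m₀ * (q : ℝ)) * Pc ≤ kL * (640000 * Pc) * Pc :=
        mul_le_mul_of_nonneg_right (mul_le_mul_of_nonneg_left hC' hkL0) hPc0
      nlinarith [t1, t2]
    have key1 : (q : ℝ) * I ^ 2 / 2 ≤ 640000 * kL * Pc ^ 2 := by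
      have t3 : (q : ℝ) * (Pc * I) ≤ (q : ℝ) * (I / 2 * I) :=
        mul_le_mul_of_nonneg_left (mul_le_mul_of_nonneg_right hPI hI0.le) hq0
      nlinarith [hB'', t3]
    have key2 : Pc ^ 2 ≤ (1 / 10000000 * kL * s) ^ 2 := by
      apply pow_le_pow_left₀ hPc0 hPcs.le
    have key3 : (1 / 10000000 * kL * s) ^ 2 = kL ^ 2 * (q : ℝ) / 100000000000000 := by
      rw [mul_pow, mul_pow, hs2]
      ring
    rw [key3] at key2
    have key4 : (q : ℝ) * I ^ 2 / 2 ≤ 640000 * kL * (kL ^ 2 * (q : ℝ) / 100000000000000) :=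
      le_trans key1 (mul_le_mul_of_nonneg_left key2 (by positivity))
    have key5 : I ^ 2 ≤ kL ^ 3 * (1280000 / 100000000000000) := by
      nlinarith [key4, hqpos]
    have key6 : (kL * ((q : ℝ) / 200)) ^ 2 ≤ I ^ 2 := by
      apply pow_le_pow_left₀ (by positivity) hIlb
    have key7 : kL ^ 3 ≤ 3 * (q : ℝ) ^ 2 * kL ^ 2 := by
      nlinarith [mul_le_mul_of_nonneg_right hLq (sq_nonneg kL)]
    have hposk : (0 : ℝ) < kL ^ 2 := by positivity
    have hposq2 : (0 : ℝ) < (q : ℝ) ^ 2 := by positivity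
    nlinarith [key5, key6, key7, mul_pos hposk hposq2, hqpos]
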